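/- arXiv:1012.5364 — 2 statements merged into one kernel-verified Lean document; each statement's English description precedes it below -/
import Mathlib

section
/- Let N ≥ 1 be an integer, n > max(N−2, 0) a real number, R > 0, K ≥ 0, γ > 1, M > 0, T > 0. Suppose ρ, V : [0,T] × [0,∞) → ℝ are C¹ functions such that: (i) ρ(t,r) ≥ 0 for all t, r; (ii) ρ(t,r) = 0 and V(t,r) = 0 whenever r ≥ R; (iii) for every t ∈ [0,T], α(N)·∫₀^R ρ(t,s) s^{N−1} ds = M; (iv) for each t the map r ↦ ρ(t,r)^{γ−1} is differentiable on (0,R), and for all t ∈ [0,T] and 0 < r < R: ∂ₜV(t,r) + V(t,r)·∂ᵣV(t,r) + (Kγ/(γ−1))·∂ᵣ(ρ(t,r)^{γ−1}) = −α(N)·r^{1−N}·∫₀^r ρ(t,s) s^{N−1} ds. Then for every t ∈ [0,T], the function H(t) := ∫₀^R r^n V(t,r) dr is differentiable and satisfies H′(t) + R^{n−N+2}·M/(n−N+2) ≥ (n/(2R))·∫₀^R r^n V(t,r)² dr. -/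
/-- The constant `α(N)`: `α(1) = 1`, `α(2) = 2π`, and
`α(N) = N(N−2)·π^{N/2}/Γ(N/2+1)` for `N ≥ 3`. -/
noncomputable def alphaConst (N : ℕ) : ℝ :=
  if N = 1 then 1
  else if N = 2 then 2 * Real.pi
  else (N : ℝ) * ((N : ℝ) - 2) * Real.pi ^ ((N : ℝ) / 2) / Real.Gamma ((N : ℝ) / 2 + 1)


open MeasureTheory intervalIntegral Set Function in
private lemma alphaConst_pos {N : ℕ} (hN : 1 ≤ N) : 0 < alphaConst N := by
  rw [alphaConst]
  split_ifs with h1 h2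
  · norm_num
  · positivity
  · have h3 : 3 ≤ N := by omega
    have h3' : (3:ℝ) ≤ (N:ℝ) := by exact_mod_cast h3
    apply div_pos
    · apply mul_pos (mul_pos (by linarith) (by linarith))
        (Real.rpow_pos_of_pos Real.pi_pos _)
    · exact Real.Gamma_pos_of_pos (by positivity)

private lemma aeeq_Ioc_of_Ioo' {f g : ℝ → ℝ} {a b : ℝ} (h : ∀ x ∈ Set.Ioo a b, f x = g x) :
    f =ᵐ[MeasureTheory.volume.restrict (Set.Ioc a b)] g := by
  rw [← MeasureTheory.Measure.restrict_congr_set MeasureTheory.Ioo_ae_eq_Ioc]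
  exact (MeasureTheory.ae_restrict_iff' measurableSet_Ioo).mpr (Filter.Eventually.of_forall h)

private lemma intervalIntegrable_congr_Ioo {f g : ℝ → ℝ} {a b : ℝ} (hab : a ≤ b)
    (h : ∀ x ∈ Set.Ioo a b, f x = g x)
    (hg : IntervalIntegrable g MeasureTheory.volume a b) :
    IntervalIntegrable f MeasureTheory.volume a b := by
  rw [intervalIntegrable_iff_integrableOn_Ioc_of_le hab] at hg ⊢
  exact hg.congr_fun_ae (aeeq_Ioc_of_Ioo' h).symm

private lemma intervalIntegral_congr_Ioo {f g : ℝ → ℝ} {a b : ℝ} (hab : a ≤ b)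
    (h : ∀ x ∈ Set.Ioo a b, f x = g x) :
    ∫ x in a..b, f x = ∫ x in a..b, g x := by
  apply intervalIntegral.integral_congr_ae
  have hb : ∀ᵐ x : ℝ, x ≠ b := by
    refine (MeasureTheory.ae_iff).mpr ?_
    simpa using MeasureTheory.measure_singleton b
  filter_upwards [hb] with x hxb hxI
  rw [Set.uIoc_of_le hab] at hxI
  exact h x ⟨hxI.1, lt_of_le_of_ne hxI.2 hxb⟩

open MeasureTheory intervalIntegral Set Function in
/-- Intermediate differential inequality of the integration method for the attractive
Euler–Poisson system: the functional `H(t) = ∫₀^R rⁿ V(t,r) dr` is differentiable and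
satisfies `H′(t) + R^{n−N+2}M/(n−N+2) ≥ (n/(2R))·∫₀^R rⁿ V(t,r)² dr`. -/
theorem intermediate_inequality_attractive
    (N : ℕ) (hN : 1 ≤ N) (n R K γ M T : ℝ)
    (hn : max ((N : ℝ) - 2) 0 < n) (hR : 0 < R) (hK : 0 ≤ K) (hγ : 1 < γ)
    (hM : 0 < M) (hT : 0 < T)
    (ρ V : ℝ → ℝ → ℝ)
    (hρC1 : ContDiffOn ℝ 1 (Function.uncurry ρ) (Set.Icc 0 T ×ˢ Set.Ici 0))
    (hVC1 : ContDiffOn ℝ 1 (Function.uncurry V) (Set.Icc 0 T ×ˢ Set.Ici 0))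
    (hρnn : ∀ t r, 0 ≤ ρ t r)
    (hsupp : ∀ t r, R ≤ r → ρ t r = 0 ∧ V t r = 0)
    (hmass : ∀ t ∈ Set.Icc (0:ℝ) T,
      alphaConst N * (∫ s in (0:ℝ)..R, ρ t s * s ^ (N - 1)) = M)
    (hdiffp : ∀ t ∈ Set.Icc (0:ℝ) T, ∀ r ∈ Set.Ioo (0:ℝ) R,
      DifferentiableAt ℝ (fun s => ρ t s ^ (γ - 1)) r)
    (hmom : ∀ t ∈ Set.Icc (0:ℝ) T, ∀ r ∈ Set.Ioo (0:ℝ) R,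
      deriv (fun τ => V τ r) t + V t r * deriv (fun s => V t s) r
        + (K * γ / (γ - 1)) * deriv (fun s => ρ t s ^ (γ - 1)) r
      = -(alphaConst N * r ^ ((1:ℝ) - N) * ∫ s in (0:ℝ)..r, ρ t s * s ^ (N - 1))) :
    DifferentiableOn ℝ (fun t => ∫ r in (0:ℝ)..R, r ^ n * V t r) (Set.Icc 0 T) ∧
    ∀ t ∈ Set.Icc (0:ℝ) T,
      n / (2 * R) * ∫ r in (0:ℝ)..R, r ^ n * V t r ^ 2
      ≤ derivWithin (fun t => ∫ r in (0:ℝ)..R, r ^ n * V t r) (Set.Icc 0 T) t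
          + R ^ (n - N + 2) * M / (n - N + 2) := by
  have hT0 : (0:ℝ) ≤ T := hT.le
  have hn0 : 0 < n := lt_of_le_of_lt (le_max_right _ _) hn
  have hnN : (N:ℝ) - 2 < n := lt_of_le_of_lt (le_max_left _ _) hn
  have hN1 : (1:ℝ) ≤ (N:ℝ) := by exact_mod_cast hN
  have hexp0 : (-1:ℝ) < n + 1 - N := by linarith
  have hexp1 : (0:ℝ) < n - N + 2 := by linarith
  have halpha : 0 < alphaConst N := alphaConst_pos hN
  have hcrn : Continuous (fun x : ℝ => x ^ n) :=
    continuous_iff_continuousAt.mpr fun x => Real.continuousAt_rpow_const x n (Or.inr hn0.le)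
  have hcrP : Continuous (fun x : ℝ => x ^ (γ - 1)) :=
    continuous_iff_continuousAt.mpr fun x => Real.continuousAt_rpow_const x _ (Or.inr (by linarith))
  set c : ℝ := K * γ / (γ - 1) with hcdef
  have hcnn : 0 ≤ c := div_nonneg (mul_nonneg hK (by linarith)) (by linarith)
  set S : Set (ℝ × ℝ) := Set.Icc 0 T ×ˢ Set.Ici 0 with hSdef
  have hSu : UniqueDiffOn ℝ S := (uniqueDiffOn_Icc hT).prod (uniqueDiffOn_Ici 0)
  have hVco : ContinuousOn (uncurry V) S := hVC1.continuousOn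
  have hρco : ContinuousOn (uncurry ρ) S := hρC1.continuousOn
  set gV : ℝ × ℝ → ℝ := fun p => fderivWithin ℝ (uncurry V) S p (1, 0) with hgVdef
  set gW : ℝ × ℝ → ℝ := fun p => fderivWithin ℝ (uncurry V) S p (0, 1) with hgWdef
  have hfdc : ContinuousOn (fderivWithin ℝ (uncurry V) S) S :=
    hVC1.continuousOn_fderivWithin hSu le_rfl
  have hgVc : ContinuousOn gV S := hfdc.clm_apply continuousOn_const
  have hgWc : ContinuousOn gW S := hfdc.clm_apply continuousOn_const
  -- clamping
  set pj : ℝ × ℝ → ℝ × ℝ := fun p => (max 0 (min p.1 T), max 0 p.2) with hpjdef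
  have hpjc : Continuous pj := by fun_prop
  have hpjS : ∀ p, pj p ∈ S := fun p =>
    ⟨⟨le_max_left _ _, max_le hT0 (min_le_right _ _)⟩, Set.mem_Ici.mpr (le_max_left _ _)⟩
  have hpj_id : ∀ t ∈ Icc (0:ℝ) T, ∀ r ∈ Ici (0:ℝ), pj (t, r) = (t, r) := by
    intro t ht r hr
    simp only [hpjdef]
    rw [min_eq_left ht.2, max_eq_right ht.1, max_eq_right hr]
  -- slices
  have hslice : ∀ t ∈ Icc (0:ℝ) T, Continuous (fun r : ℝ => (t, r)) := fun t _ => by fun_prop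
  have hslc : ∀ t : ℝ, ContinuousOn (fun r : ℝ => ((t:ℝ), r)) (Ici 0) := fun t =>
    (continuous_const.prodMk continuous_id).continuousOn
  have hVrc : ∀ t ∈ Icc (0:ℝ) T, ContinuousOn (fun r => V t r) (Ici 0) := by
    intro t ht
    exact hVco.comp (hslc t) (fun r hr => ⟨ht, hr⟩)
  have hρrc : ∀ t ∈ Icc (0:ℝ) T, ContinuousOn (fun r => ρ t r) (Ici 0) := by
    intro t ht
    exact hρco.comp (hslc t) (fun r hr => ⟨ht, hr⟩)
  have hgVrc : ∀ t ∈ Icc (0:ℝ) T, ContinuousOn (fun r => gV (t, r)) (Ici 0) := by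
    intro t ht
    exact hgVc.comp (hslc t) (fun r hr => ⟨ht, hr⟩)
  have hgWrc : ∀ t ∈ Icc (0:ℝ) T, ContinuousOn (fun r => gW (t, r)) (Ici 0) := by
    intro t ht
    exact hgWc.comp (hslc t) (fun r hr => ⟨ht, hr⟩)
  -- within derivative in t
  have hVt : ∀ r ∈ Ici (0:ℝ), ∀ t ∈ Icc (0:ℝ) T,
      HasDerivWithinAt (fun τ => V τ r) (gV (t, r)) (Icc 0 T) t := by
    intro r hr t ht
    have h1 : HasFDerivWithinAt (uncurry V) (fderivWithin ℝ (uncurry V) S (t, r)) S (t, r) :=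
      ((hVC1.differentiableOn one_ne_zero) _ ⟨ht, hr⟩).hasFDerivWithinAt
    have h2 : HasDerivWithinAt (fun τ : ℝ => (τ, r)) ((1:ℝ), (0:ℝ)) (Icc 0 T) t :=
      ((hasDerivAt_id t).prodMk (hasDerivAt_const t r)).hasDerivWithinAt
    have h3 := h1.comp_hasDerivWithinAt t h2 (fun τ hτ => (⟨hτ, hr⟩ : (τ, r) ∈ S))
    exact h3
  -- interior full derivatives
  have hSnh : ∀ t ∈ Ioo (0:ℝ) T, ∀ r ∈ Ioi (0:ℝ), S ∈ nhds ((t:ℝ), (r:ℝ)) := by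
    intro t ht r hr
    have h1 : Ioo 0 T ×ˢ Ioi (0:ℝ) ∈ nhds (t, r) :=
      (isOpen_Ioo.prod isOpen_Ioi).mem_nhds ⟨ht, hr⟩
    exact Filter.mem_of_superset h1 (prod_mono Ioo_subset_Icc_self Ioi_subset_Ici_self)
  have hVtd : ∀ t ∈ Ioo (0:ℝ) T, ∀ r ∈ Ioi (0:ℝ),
      HasDerivAt (fun τ => V τ r) (gV (t, r)) t := by
    intro t ht r hr
    have hnh := hSnh t ht r hr
    have hda : DifferentiableAt ℝ (uncurry V) (t, r) :=
      ((hVC1.differentiableOn one_ne_zero) _ ⟨Ioo_subset_Icc_self ht, Set.mem_Ici.mpr (le_of_lt (Set.mem_Ioi.mp hr))⟩).differentiableAt hnh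
    have h2 : HasDerivAt (fun τ : ℝ => (τ, r)) ((1:ℝ), (0:ℝ)) t :=
      (hasDerivAt_id t).prodMk (hasDerivAt_const t r)
    have h3 := hda.hasFDerivAt.comp_hasDerivAt t h2
    have hfw : fderivWithin ℝ (uncurry V) S (t, r) = fderiv ℝ (uncurry V) (t, r) :=
      fderivWithin_of_mem_nhds hnh
    simp only [hgVdef, hfw]
    exact h3
  have hVrd : ∀ t ∈ Ioo (0:ℝ) T, ∀ r ∈ Ioi (0:ℝ),
      HasDerivAt (fun s => V t s) (gW (t, r)) r := by
    intro t ht r hr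
    have hnh := hSnh t ht r hr
    have hda : DifferentiableAt ℝ (uncurry V) (t, r) :=
      ((hVC1.differentiableOn one_ne_zero) _ ⟨Ioo_subset_Icc_self ht, Set.mem_Ici.mpr (le_of_lt (Set.mem_Ioi.mp hr))⟩).differentiableAt hnh
    have h2 : HasDerivAt (fun s : ℝ => ((t:ℝ), s)) ((0:ℝ), (1:ℝ)) r :=
      (hasDerivAt_const r t).prodMk (hasDerivAt_id r)
    have h3 := hda.hasFDerivAt.comp_hasDerivAt r h2
    have hfw : fderivWithin ℝ (uncurry V) S (t, r) = fderiv ℝ (uncurry V) (t, r) :=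
      fderivWithin_of_mem_nhds hnh
    simp only [hgWdef, hfw]
    exact h3
  -- key pointwise identity
  have hkey : ∀ t ∈ Ioo (0:ℝ) T, ∀ r ∈ Ioo (0:ℝ) R,
      gV (t, r) = -(V t r * gW (t, r)) - c * deriv (fun s => ρ t s ^ (γ - 1)) r
        - alphaConst N * r ^ ((1:ℝ) - N) * (∫ s in (0:ℝ)..r, ρ t s * s ^ (N - 1)) := by
    intro t ht r hr
    have h := hmom t (Ioo_subset_Icc_self ht) r hr
    have e1 := (hVtd t ht r hr.1).deriv
    have e2 := (hVrd t ht r hr.1).deriv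
    rw [e1, e2] at h
    linarith
  -- mass function facts
  have hρR : ∀ t, ρ t R = 0 := fun t => (hsupp t R le_rfl).1
  have hVR : ∀ t, V t R = 0 := fun t => (hsupp t R le_rfl).2
  have hmic : ∀ t ∈ Icc (0:ℝ) T, ContinuousOn (fun s : ℝ => ρ t s * s ^ (N - 1)) (Ici 0) := by
    intro t ht
    exact (hρrc t ht).mul (continuous_pow _).continuousOn
  have hmii : ∀ t ∈ Icc (0:ℝ) T, ∀ a b : ℝ, 0 ≤ a → 0 ≤ b →
      IntervalIntegrable (fun s : ℝ => ρ t s * s ^ (N - 1)) volume a b := by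
    intro t ht a b ha hb
    apply ContinuousOn.intervalIntegrable
    exact (hmic t ht).mono (fun x hx => le_trans (le_min ha hb) hx.1)
  set mfun : ℝ → ℝ → ℝ := fun t r => ∫ s in (0:ℝ)..r, ρ t s * s ^ (N - 1) with hmdef
  have hmnn : ∀ t ∈ Icc (0:ℝ) T, ∀ r, 0 ≤ r → 0 ≤ mfun t r := by
    intro t ht r hr
    apply intervalIntegral.integral_nonneg hr
    intro s hs
    exact mul_nonneg (hρnn t s) (pow_nonneg hs.1 _)
  have hmle : ∀ t ∈ Icc (0:ℝ) T, ∀ r ∈ Icc (0:ℝ) R, alphaConst N * mfun t r ≤ M := by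
    intro t ht r hr
    rw [← hmass t ht]
    have hadd : mfun t r + (∫ s in r..R, ρ t s * s ^ (N - 1)) = mfun t R :=
      intervalIntegral.integral_add_adjacent_intervals (hmii t ht 0 r le_rfl hr.1)
        (hmii t ht r R hr.1 hR.le)
    have hpos : 0 ≤ ∫ s in r..R, ρ t s * s ^ (N - 1) :=
      intervalIntegral.integral_nonneg hr.2
        (fun s hs => mul_nonneg (hρnn t s) (pow_nonneg (le_trans hr.1 hs.1) _))
    have hle : mfun t r ≤ mfun t R := by linarith
    exact mul_le_mul_of_nonneg_left hle halpha.le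
  have hmcont : ∀ t ∈ Icc (0:ℝ) T, ContinuousOn (fun r => mfun t r) (Icc 0 R) := by
    intro t ht
    have hint : IntegrableOn (fun s : ℝ => ρ t s * s ^ (N - 1)) (uIcc 0 R) volume := by
      rw [uIcc_of_le hR.le]
      exact ((hmic t ht).mono Icc_subset_Ici_self).integrableOn_compact isCompact_Icc
    have h2 := intervalIntegral.continuousOn_primitive_interval hint
    rwa [uIcc_of_le hR.le] at h2
  -- clamped continuous versions
  set Vc : ℝ × ℝ → ℝ := fun p => uncurry V (pj p) with hVcdef
  have hVcc : Continuous Vc := hVco.comp_continuous hpjc hpjS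
  set gVcl : ℝ × ℝ → ℝ := fun p => gV (pj p) with hgVcldef
  have hgVclc : Continuous gVcl := hgVc.comp_continuous hpjc hpjS
  set Gc : ℝ → ℝ := fun t => ∫ r in (0:ℝ)..R, r ^ n * gVcl (t, r) with hGcdef
  have hGccont : Continuous Gc := by
    apply intervalIntegral.continuous_parametric_intervalIntegral_of_continuous' (μ := volume)
      ?_ 0 R
    exact (hcrn.comp continuous_snd).mul hgVclc
  set Lf : ℝ → ℝ := fun t => ∫ r in (0:ℝ)..R, r ^ n * Vc (t, r) ^ 2 with hLdef
  have hLcont : Continuous Lf := by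
    apply intervalIntegral.continuous_parametric_intervalIntegral_of_continuous' (μ := volume)
      ?_ 0 R
    exact (hcrn.comp continuous_snd).mul (hVcc.pow 2)
  have hVceq : ∀ t ∈ Icc (0:ℝ) T, ∀ r ∈ Ici (0:ℝ), Vc (t, r) = V t r := by
    intro t ht r hr
    show uncurry V (pj (t, r)) = V t r
    rw [hpj_id t ht r hr]
    rfl
  have hgVcleq : ∀ t ∈ Icc (0:ℝ) T, ∀ r ∈ Ici (0:ℝ), gVcl (t, r) = gV (t, r) := by
    intro t ht r hr
    show gV (pj (t, r)) = gV (t, r)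
    rw [hpj_id t ht r hr]
  have hLeq : ∀ t ∈ Icc (0:ℝ) T, (∫ r in (0:ℝ)..R, r ^ n * V t r ^ 2) = Lf t := by
    intro t ht
    apply intervalIntegral.integral_congr
    intro r hr
    rw [uIcc_of_le hR.le] at hr
    show r ^ n * V t r ^ 2 = r ^ n * Vc (t, r) ^ 2
    rw [hVceq t ht r hr.1]
  have hGeq : ∀ t ∈ Icc (0:ℝ) T, Gc t = ∫ r in (0:ℝ)..R, r ^ n * gV (t, r) := by
    intro t ht
    apply intervalIntegral.integral_congr
    intro r hr
    rw [uIcc_of_le hR.le] at hr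
    show r ^ n * gVcl (t, r) = r ^ n * gV (t, r)
    rw [hgVcleq t ht r hr.1]
  -- the functional H
  set H : ℝ → ℝ := fun t => ∫ r in (0:ℝ)..R, r ^ n * V t r with hHdef
  have hint1 : ∀ u ∈ Icc (0:ℝ) T, IntervalIntegrable (fun r : ℝ => r ^ n * V u r) volume 0 R := by
    intro u hu
    apply ContinuousOn.intervalIntegrable
    rw [uIcc_of_le hR.le]
    exact hcrn.continuousOn.mul ((hVrc u hu).mono Icc_subset_Ici_self)
  have hHeq : ∀ t ∈ Icc (0:ℝ) T, H t = H 0 + ∫ s in (0:ℝ)..t, Gc s := by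
    intro t ht
    have h0t : (0:ℝ) ≤ t := ht.1
    have hcont2 : Continuous (fun p : ℝ × ℝ => p.2 ^ n * gVcl p) :=
      (hcrn.comp continuous_snd).mul hgVclc
    have hswap : (∫ s in (0:ℝ)..t, Gc s)
        = ∫ r in (0:ℝ)..R, ∫ s in (0:ℝ)..t, r ^ n * gVcl (s, r) := by
      simp only [hGcdef]
      rw [intervalIntegral.integral_of_le h0t, intervalIntegral.integral_of_le hR.le]
      simp_rw [intervalIntegral.integral_of_le hR.le, intervalIntegral.integral_of_le h0t]
      apply MeasureTheory.integral_integral_swap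
      rw [Measure.prod_restrict]
      apply MeasureTheory.IntegrableOn.mono_set
        (t := Icc (0:ℝ) t ×ˢ Icc (0:ℝ) R) ?_
        (prod_mono Ioc_subset_Icc_self Ioc_subset_Icc_self)
      exact hcont2.continuousOn.integrableOn_compact (isCompact_Icc.prod isCompact_Icc)
    have hFTC : ∀ r ∈ Icc (0:ℝ) R,
        (∫ s in (0:ℝ)..t, r ^ n * gVcl (s, r)) = r ^ n * V t r - r ^ n * V 0 r := by
      intro r hr
      rw [intervalIntegral.integral_const_mul]
      have h2 : (∫ s in (0:ℝ)..t, gVcl (s, r)) = V t r - V 0 r := by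
        apply intervalIntegral.integral_eq_sub_of_hasDeriv_right_of_le h0t
        · have hc : ContinuousOn (fun τ => V τ r) (Icc 0 T) :=
            hVco.comp ((continuous_id.prodMk continuous_const).continuousOn)
              (fun τ hτ => ⟨hτ, Set.mem_Ici.mpr hr.1⟩)
          exact hc.mono (Icc_subset_Icc le_rfl ht.2)
        · intro x hx
          have hx' : x ∈ Icc (0:ℝ) T := ⟨hx.1.le, hx.2.le.trans ht.2⟩
          rw [hgVcleq x hx' r hr.1]
          apply (hVt r hr.1 x hx').mono_of_mem_nhdsWithin
          apply Filter.mem_of_superset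
            (Ioc_mem_nhdsGT_of_mem (⟨le_rfl, lt_of_lt_of_le hx.2 ht.2⟩ : x ∈ Ico x T))
          exact fun y hy => ⟨(hx.1.trans hy.1).le, hy.2⟩
        · exact (hgVclc.comp (continuous_id.prodMk continuous_const)).intervalIntegrable 0 t
      rw [h2]
      ring
    have hkey2 : (∫ s in (0:ℝ)..t, Gc s) = H t - H 0 := by
      rw [hswap]
      rw [intervalIntegral.integral_congr (g := fun r => r ^ n * V t r - r ^ n * V 0 r)
        (fun r hr => hFTC r (by rwa [uIcc_of_le hR.le] at hr))]
      rw [intervalIntegral.integral_sub (hint1 t ht) (hint1 0 ⟨le_rfl, hT0⟩)]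
    linarith
  have hHd : ∀ t ∈ Icc (0:ℝ) T, HasDerivWithinAt H (Gc t) (Icc 0 T) t := by
    intro t ht
    have h1 : HasDerivAt (fun u => H 0 + ∫ s in (0:ℝ)..u, Gc s) (Gc t) t :=
      ((hGccont.integral_hasStrictDerivAt 0 t).hasDerivAt).const_add (H 0)
    exact h1.hasDerivWithinAt.congr (fun y hy => hHeq y hy) (hHeq t ht)
  have hdiff : DifferentiableOn ℝ H (Icc 0 T) :=
    fun t ht => (hHd t ht).differentiableWithinAt
  have hderivW : ∀ t ∈ Icc (0:ℝ) T, derivWithin H (Icc 0 T) t = Gc t :=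
    fun t ht => (hHd t ht).derivWithin ((uniqueDiffOn_Icc hT) t ht)
  -- main inequality at interior times
  have hmain : ∀ t ∈ Ioo (0:ℝ) T,
      n / (2 * R) * Lf t ≤ Gc t + R ^ (n - N + 2) * M / (n - N + 2) := by
    intro t ht
    have htI : t ∈ Icc (0:ℝ) T := Ioo_subset_Icc_self ht
    have hVtc : ContinuousOn (fun r => V t r) (Icc 0 R) := (hVrc t htI).mono Icc_subset_Ici_self
    have hρtc : ContinuousOn (fun r => ρ t r) (Icc 0 R) := (hρrc t htI).mono Icc_subset_Ici_self
    have hgVtc : ContinuousOn (fun r => gV (t, r)) (Icc 0 R) :=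
      (hgVrc t htI).mono Icc_subset_Ici_self
    have hgWtc : ContinuousOn (fun r => gW (t, r)) (Icc 0 R) :=
      (hgWrc t htI).mono Icc_subset_Ici_self
    -- generic integrability helper
    have hii_pow : ∀ e : ℝ, -1 < e → ∀ f : ℝ → ℝ, ContinuousOn f (Icc 0 R) →
        IntervalIntegrable (fun r => r ^ e * f r) volume 0 R := by
      intro e he f hf
      obtain ⟨C, hC⟩ := isCompact_Icc.exists_bound_of_continuousOn hf
      have hCnn : 0 ≤ C := le_trans (norm_nonneg _) (hC 0 ⟨le_rfl, hR.le⟩)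
      have hg : IntervalIntegrable (fun r : ℝ => C * r ^ e) volume 0 R :=
        (intervalIntegral.intervalIntegrable_rpow' he).const_mul C
      have hc1 : ContinuousOn (fun r : ℝ => r ^ e) (Ioc 0 R) := fun x hx =>
        (Real.continuousAt_rpow_const x _ (Or.inl hx.1.ne')).continuousWithinAt
      have haesm : AEStronglyMeasurable (fun r : ℝ => r ^ e * f r)
          (volume.restrict (Set.uIoc 0 R)) := by
        rw [uIoc_of_le hR.le]
        exact (hc1.mul (hf.mono Ioc_subset_Icc_self)).aestronglyMeasurable measurableSet_Ioc
      refine hg.mono_fun haesm ?_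
      rw [uIoc_of_le hR.le]
      refine (ae_restrict_iff' measurableSet_Ioc).mpr (Filter.Eventually.of_forall ?_)
      intro x hx
      have hx0 : (0:ℝ) ≤ x ^ e := Real.rpow_nonneg hx.1.le _
      simp only [Real.norm_eq_abs]
      rw [abs_mul, abs_of_nonneg hx0, abs_mul, abs_of_nonneg hCnn, abs_of_nonneg hx0]
      calc x ^ e * |f x| ≤ x ^ e * C := by
            apply mul_le_mul_of_nonneg_left ?_ hx0
            simpa [Real.norm_eq_abs] using hC x (Ioc_subset_Icc_self hx)
        _ = C * x ^ e := mul_comm _ _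
    -- concrete integrability facts
    have iA : IntervalIntegrable (fun r => r ^ (n - 1) * V t r ^ 2) volume 0 R :=
      hii_pow (n - 1) (by linarith) _ (hVtc.pow 2)
    have iP : IntervalIntegrable (fun r => r ^ (n - 1) * ρ t r ^ (γ - 1)) volume 0 R :=
      hii_pow (n - 1) (by linarith) _ (hcrP.comp_continuousOn hρtc)
    have iF : IntervalIntegrable (fun r => r ^ (n + 1 - (N:ℝ)) * mfun t r) volume 0 R :=
      hii_pow _ hexp0 _ (hmcont t htI)
    have iMF : IntervalIntegrable (fun r => r ^ (n + 1 - (N:ℝ)) * M) volume 0 R :=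
      hii_pow _ hexp0 _ continuousOn_const
    have iVW : IntervalIntegrable (fun r => r ^ n * (V t r * gW (t, r))) volume 0 R := by
      apply ContinuousOn.intervalIntegrable
      rw [uIcc_of_le hR.le]
      exact hcrn.continuousOn.mul (hVtc.mul hgWtc)
    have igV : IntervalIntegrable (fun r => r ^ n * gV (t, r)) volume 0 R := by
      apply ContinuousOn.intervalIntegrable
      rw [uIcc_of_le hR.le]
      exact hcrn.continuousOn.mul hgVtc
    have iV2n : IntervalIntegrable (fun r => r ^ n * V t r ^ 2) volume 0 R := by
      apply ContinuousOn.intervalIntegrable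
      rw [uIcc_of_le hR.le]
      exact hcrn.continuousOn.mul (hVtc.pow 2)
    -- (a) integration by parts for the kinetic term
    have hIBP1 : (n / 2) * (∫ r in (0:ℝ)..R, r ^ (n - 1) * V t r ^ 2)
        + (∫ r in (0:ℝ)..R, r ^ n * (V t r * gW (t, r))) = 0 := by
      have hφc : ContinuousOn (fun r => r ^ n * V t r ^ 2 / 2) (Icc 0 R) :=
        (hcrn.continuousOn.mul (hVtc.pow 2)).div_const 2
      have hφd : ∀ x ∈ Ioo (0:ℝ) R, HasDerivWithinAt (fun r => r ^ n * V t r ^ 2 / 2)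
          ((fun r => (n / 2) * (r ^ (n - 1) * V t r ^ 2) + r ^ n * (V t r * gW (t, r))) x)
          (Ioi x) x := by
        intro x hx
        have h1 : HasDerivAt (fun r : ℝ => r ^ n) (n * x ^ (n - 1)) x :=
          Real.hasDerivAt_rpow_const (Or.inl hx.1.ne')
        have h2 : HasDerivAt (fun r => V t r) (gW (t, x)) x := hVrd t ht x hx.1
        have h3 : HasDerivAt (fun r => V t r ^ 2) ((2:ℕ) * V t x ^ 1 * gW (t, x)) x := h2.pow 2
        have h4 := (h1.mul h3).div_const 2
        have h5 : HasDerivAt (fun r => r ^ n * V t r ^ 2 / 2)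
            ((n / 2) * (x ^ (n - 1) * V t x ^ 2) + x ^ n * (V t x * gW (t, x))) x := by
          refine h4.congr_deriv ?_
          push_cast
          ring
        exact h5.hasDerivWithinAt
      have hφi : IntervalIntegrable
          (fun r => (n / 2) * (r ^ (n - 1) * V t r ^ 2) + r ^ n * (V t r * gW (t, r)))
          volume 0 R := (iA.const_mul (n / 2)).add iVW
      have h := intervalIntegral.integral_eq_sub_of_hasDeriv_right_of_le hR.le hφc hφd hφi
      have hφR : R ^ n * V t R ^ 2 / 2 = 0 := by simp [hVR t]
      have hφ0 : (0:ℝ) ^ n * V 0 0 ^ 2 / 2 = 0 := by simp [Real.zero_rpow hn0.ne']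
      rw [hφR] at h
      rw [show (0:ℝ) ^ n * V t 0 ^ 2 / 2 = 0 by simp [Real.zero_rpow hn0.ne']] at h
      rw [intervalIntegral.integral_add (iA.const_mul (n / 2)) iVW,
        intervalIntegral.integral_const_mul] at h
      linarith
    -- (b) pressure term
    have hQ : IntervalIntegrable
          (fun r => r ^ n * (c * deriv (fun s => ρ t s ^ (γ - 1)) r)) volume 0 R ∧
        (∫ r in (0:ℝ)..R, r ^ n * (c * deriv (fun s => ρ t s ^ (γ - 1)) r)) ≤ 0 := by
      rcases eq_or_lt_of_le hcnn with hc0 | hcpos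
      · constructor
        · simp only [← hc0, zero_mul, mul_zero]
          exact intervalIntegrable_const
        · simp [← hc0]
      · have hW3i : IntervalIntegrable (fun r => -(r ^ n * gV (t, r))
            - r ^ n * (V t r * gW (t, r))
            - alphaConst N * (r ^ (n + 1 - (N:ℝ)) * mfun t r)) volume 0 R :=
          (igV.neg.sub iVW).sub (iF.const_mul _)
        have heqIoo : ∀ x ∈ Ioo (0:ℝ) R,
            x ^ n * (c * deriv (fun s => ρ t s ^ (γ - 1)) x)
            = -(x ^ n * gV (t, x)) - x ^ n * (V t x * gW (t, x))
              - alphaConst N * (x ^ (n + 1 - (N:ℝ)) * mfun t x) := by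
          intro x hx
          have hrw : x ^ (n + 1 - (N:ℝ)) = x ^ n * x ^ ((1:ℝ) - N) := by
            rw [← Real.rpow_add hx.1]
            congr 1
            ring
          have hk := hkey t ht x hx
          rw [hrw]
          have hk' : c * deriv (fun s => ρ t s ^ (γ - 1)) x
              = -gV (t, x) - V t x * gW (t, x)
                - alphaConst N * x ^ ((1:ℝ) - N) * mfun t x := by
            rw [hk]; ring
          rw [hk']
          ring
        have hQint : IntervalIntegrable
            (fun r => r ^ n * (c * deriv (fun s => ρ t s ^ (γ - 1)) r)) volume 0 R :=
          intervalIntegrable_congr_Ioo hR.le heqIoo hW3i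
        refine ⟨hQint, ?_⟩
        -- FTC for the pressure potential
        have hψc : ContinuousOn (fun r => c * (r ^ n * ρ t r ^ (γ - 1))) (Icc 0 R) :=
          continuousOn_const.mul (hcrn.continuousOn.mul (hcrP.comp_continuousOn hρtc))
        have hψd : ∀ x ∈ Ioo (0:ℝ) R, HasDerivWithinAt (fun r => c * (r ^ n * ρ t r ^ (γ - 1)))
            ((fun r => (c * n) * (r ^ (n - 1) * ρ t r ^ (γ - 1))
              + r ^ n * (c * deriv (fun s => ρ t s ^ (γ - 1)) r)) x) (Ioi x) x := by
          intro x hx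
          have h1 : HasDerivAt (fun r : ℝ => r ^ n) (n * x ^ (n - 1)) x :=
            Real.hasDerivAt_rpow_const (Or.inl hx.1.ne')
          have h2 : HasDerivAt (fun r => ρ t r ^ (γ - 1))
              (deriv (fun s => ρ t s ^ (γ - 1)) x) x := (hdiffp t htI x hx).hasDerivAt
          have h4 := (h1.mul h2).const_mul c
          have h5 : HasDerivAt (fun r => c * (r ^ n * ρ t r ^ (γ - 1)))
              ((c * n) * (x ^ (n - 1) * ρ t x ^ (γ - 1))
                + x ^ n * (c * deriv (fun s => ρ t s ^ (γ - 1)) x)) x := by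
            refine h4.congr_deriv ?_
            ring
          exact h5.hasDerivWithinAt
        have hψi : IntervalIntegrable (fun r => (c * n) * (r ^ (n - 1) * ρ t r ^ (γ - 1))
            + r ^ n * (c * deriv (fun s => ρ t s ^ (γ - 1)) r)) volume 0 R :=
          (iP.const_mul (c * n)).add hQint
        have h := intervalIntegral.integral_eq_sub_of_hasDeriv_right_of_le hR.le hψc hψd hψi
        rw [show c * (R ^ n * ρ t R ^ (γ - 1)) = 0 by
            rw [hρR t, Real.zero_rpow (by linarith : γ - 1 ≠ 0)]; ring] at h
        rw [show c * ((0:ℝ) ^ n * ρ t 0 ^ (γ - 1)) = 0 by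
            rw [Real.zero_rpow hn0.ne']; ring] at h
        rw [intervalIntegral.integral_add (iP.const_mul (c * n)) hQint,
          intervalIntegral.integral_const_mul] at h
        have hPnn : 0 ≤ ∫ r in (0:ℝ)..R, r ^ (n - 1) * ρ t r ^ (γ - 1) :=
          intervalIntegral.integral_nonneg hR.le (fun x hx =>
            mul_nonneg (Real.rpow_nonneg hx.1 _) (Real.rpow_nonneg (hρnn t x) _))
        nlinarith [mul_nonneg (mul_nonneg hcpos.le hn0.le) hPnn]
    -- (c) force term bound
    have hFle : (∫ r in (0:ℝ)..R, alphaConst N * (r ^ (n + 1 - (N:ℝ)) * mfun t r))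
        ≤ R ^ (n - N + 2) * M / (n - N + 2) := by
      have h1 : ∀ x ∈ Icc (0:ℝ) R,
          alphaConst N * (x ^ (n + 1 - (N:ℝ)) * mfun t x) ≤ x ^ (n + 1 - (N:ℝ)) * M := by
        intro x hx
        have hxp : 0 ≤ x ^ (n + 1 - (N:ℝ)) := Real.rpow_nonneg hx.1 _
        calc alphaConst N * (x ^ (n + 1 - (N:ℝ)) * mfun t x)
            = x ^ (n + 1 - (N:ℝ)) * (alphaConst N * mfun t x) := by ring
          _ ≤ x ^ (n + 1 - (N:ℝ)) * M := mul_le_mul_of_nonneg_left (hmle t htI x hx) hxp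
      have h2 : (∫ r in (0:ℝ)..R, r ^ (n + 1 - (N:ℝ)) * M)
          = R ^ (n - N + 2) * M / (n - N + 2) := by
        rw [intervalIntegral.integral_mul_const, integral_rpow (Or.inl hexp0)]
        rw [Real.zero_rpow (by linarith : n + 1 - (N:ℝ) + 1 ≠ 0)]
        rw [show n + 1 - (N:ℝ) + 1 = n - N + 2 by ring]
        ring
      calc (∫ r in (0:ℝ)..R, alphaConst N * (r ^ (n + 1 - (N:ℝ)) * mfun t r))
          ≤ ∫ r in (0:ℝ)..R, r ^ (n + 1 - (N:ℝ)) * M :=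
            intervalIntegral.integral_mono_on hR.le (iF.const_mul _) iMF h1
        _ = R ^ (n - N + 2) * M / (n - N + 2) := h2
    -- decomposition of Gc t
    have hGct : Gc t = ∫ r in (0:ℝ)..R, (-(r ^ n * (V t r * gW (t, r)))
        - r ^ n * (c * deriv (fun s => ρ t s ^ (γ - 1)) r)
        - alphaConst N * (r ^ (n + 1 - (N:ℝ)) * mfun t r)) := by
      rw [hGeq t htI]
      apply intervalIntegral_congr_Ioo hR.le
      intro x hx
      show x ^ n * gV (t, x) = -(x ^ n * (V t x * gW (t, x)))
        - x ^ n * (c * deriv (fun s => ρ t s ^ (γ - 1)) x)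
        - alphaConst N * (x ^ (n + 1 - (N:ℝ)) * mfun t x)
      have hrw : x ^ (n + 1 - (N:ℝ)) = x ^ n * x ^ ((1:ℝ) - N) := by
        rw [← Real.rpow_add hx.1]
        congr 1
        ring
      rw [hkey t ht x hx, hrw]
      ring
    have hsplit : Gc t = -(∫ r in (0:ℝ)..R, r ^ n * (V t r * gW (t, r)))
        - (∫ r in (0:ℝ)..R, r ^ n * (c * deriv (fun s => ρ t s ^ (γ - 1)) r))
        - (∫ r in (0:ℝ)..R, alphaConst N * (r ^ (n + 1 - (N:ℝ)) * mfun t r)) := by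
      have iVWneg : IntervalIntegrable (fun r => -(r ^ n * (V t r * gW (t, r)))) volume 0 R :=
        iVW.neg
      have i12 : IntervalIntegrable (fun r => -(r ^ n * (V t r * gW (t, r)))
          - r ^ n * (c * deriv (fun s => ρ t s ^ (γ - 1)) r)) volume 0 R := iVWneg.sub hQ.1
      rw [hGct, intervalIntegral.integral_sub i12 (iF.const_mul _),
        intervalIntegral.integral_sub iVWneg hQ.1, intervalIntegral.integral_neg]
    -- comparison of the two kinetic integrals
    have hLA : (∫ r in (0:ℝ)..R, r ^ n * V t r ^ 2)
        ≤ R * (∫ r in (0:ℝ)..R, r ^ (n - 1) * V t r ^ 2) := by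
      rw [← intervalIntegral.integral_const_mul]
      apply intervalIntegral.integral_mono_on hR.le iV2n (iA.const_mul R)
      intro x hx
      rcases eq_or_lt_of_le hx.1 with h0 | h0
      · rw [← h0, Real.zero_rpow hn0.ne']
        simp only [zero_mul]
        exact mul_nonneg hR.le (mul_nonneg (Real.rpow_nonneg le_rfl _) (sq_nonneg _))
      · have hxe : x ^ n = x ^ (n - 1) * x := by
          rw [← Real.rpow_add_one h0.ne' (n - 1)]
          congr 1
          ring
        rw [hxe]
        have hp : 0 ≤ x ^ (n - 1) := Real.rpow_nonneg h0.le _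
        nlinarith [sq_nonneg (V t x),
          mul_nonneg (mul_nonneg hp (sq_nonneg (V t x))) (sub_nonneg.mpr hx.2)]
    have hLf : Lf t = ∫ r in (0:ℝ)..R, r ^ n * V t r ^ 2 := (hLeq t htI).symm
    rw [hLf]
    have hRne : R ≠ 0 := hR.ne'
    have hfrac : n / (2 * R) * (R * (∫ r in (0:ℝ)..R, r ^ (n - 1) * V t r ^ 2))
        = n / 2 * (∫ r in (0:ℝ)..R, r ^ (n - 1) * V t r ^ 2) := by
      field_simp
    have hmono : n / (2 * R) * (∫ r in (0:ℝ)..R, r ^ n * V t r ^ 2)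
        ≤ n / 2 * (∫ r in (0:ℝ)..R, r ^ (n - 1) * V t r ^ 2) := by
      have hcoef : 0 ≤ n / (2 * R) := div_nonneg hn0.le (by linarith)
      calc n / (2 * R) * (∫ r in (0:ℝ)..R, r ^ n * V t r ^ 2)
          ≤ n / (2 * R) * (R * (∫ r in (0:ℝ)..R, r ^ (n - 1) * V t r ^ 2)) :=
            mul_le_mul_of_nonneg_left hLA hcoef
        _ = n / 2 * (∫ r in (0:ℝ)..R, r ^ (n - 1) * V t r ^ 2) := hfrac
    linarith [hQ.2, hFle, hIBP1, hsplit, hmono]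
  -- extension to the closed interval by continuity
  have hcl : ∀ t ∈ Icc (0:ℝ) T,
      n / (2 * R) * Lf t ≤ Gc t + R ^ (n - N + 2) * M / (n - N + 2) := by
    intro t ht
    by_cases hio : t ∈ Ioo (0:ℝ) T
    · exact hmain t hio
    · have hmem : t ∈ closure (Ioo (0:ℝ) T) := by
        rw [closure_Ioo hT.ne]
        exact ht
      haveI hne : (nhdsWithin t (Ioo (0:ℝ) T)).NeBot :=
        mem_closure_iff_nhdsWithin_neBot.mp hmem
      have h1 : Filter.Tendsto (fun s => n / (2 * R) * Lf s) (nhdsWithin t (Ioo (0:ℝ) T))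
          (nhds (n / (2 * R) * Lf t)) :=
        ((continuous_const.mul hLcont).tendsto t).mono_left nhdsWithin_le_nhds
      have h2 : Filter.Tendsto (fun s => Gc s + R ^ (n - N + 2) * M / (n - N + 2))
          (nhdsWithin t (Ioo (0:ℝ) T))
          (nhds (Gc t + R ^ (n - N + 2) * M / (n - N + 2))) :=
        ((hGccont.add continuous_const).tendsto t).mono_left nhdsWithin_le_nhds
      exact le_of_tendsto_of_tendsto h1 h2
        (eventually_mem_nhdsWithin.mono (fun x hx => hmain x hx))
  refine ⟨hdiff, ?_⟩
  intro t ht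
  rw [hderivW t ht, hLeq t ht]
  exact hcl t ht
end

section
/- Let N ≥ 1 be an integer, n > 0 a real number, R > 0, H₀ > 0, and let δ ∈ {0, 1}, K ≥ 0, γ > 1. Suppose ρ, V : [0,T′] × [0,∞) → ℝ are C¹ functions with 0 < T′ < 2R^{n+2}/(n(n+1)H₀) such that: (i) ρ(t,r) ≥ 0; (ii) ρ(t,r) = 0 and V(t,r) = 0 whenever r ≥ R; (iii) for each t the map r ↦ ρ(t,r)^{γ−1} is differentiable on (0,R) and for all t ∈ [0,T′] and 0 < r < R: ∂ₜV(t,r) + V(t,r)·∂ᵣV(t,r) + (Kγ/(γ−1))·∂ᵣ(ρ(t,r)^{γ−1}) = δ·α(N)·r^{1−N}·∫₀^r ρ(t,s) s^{N−1} ds; (iv) ∫₀^R r^n V(0,r) dr = H₀. Then for all t ∈ [0,T′], H(t) := ∫₀^R r^n V(t,r) dr satisfies the explicit lower bound H(t) ≥ −2R^{n+2}H₀ / (n(n+1)H₀·t − 2R^{n+2}), which tends to +∞ as t approaches 2R^{n+2}/(n(n+1)H₀) from below. -/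
section auxLB
open Set Function MeasureTheory intervalIntegral

lemma alphaConst_nonneg (N : ℕ) (hN : 1 ≤ N) : 0 ≤ alphaConst N := by
  unfold alphaConst
  split_ifs with h1 h2
  · norm_num
  · positivity
  · have h3 : 3 ≤ N := by omega
    apply div_nonneg
    · have h2N : (2:ℝ) ≤ (N:ℝ) := by exact_mod_cast (by omega : 2 ≤ N)
      have : (0:ℝ) ≤ (N:ℝ) - 2 := by linarith
      positivity
    · exact (Real.Gamma_pos_of_pos (by positivity)).le

variable {T' : ℝ} {f : ℝ → ℝ → ℝ}

lemma my_hasDerivAt_fst (hf : ContDiffOn ℝ 1 (Function.uncurry f) (Set.Icc 0 T' ×ˢ Set.Ici 0))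
    {t r : ℝ} (ht : t ∈ Set.Ioo 0 T') (hr : r ∈ Set.Ici (0:ℝ)) :
    HasDerivAt (fun τ => f τ r)
      (fderivWithin ℝ (Function.uncurry f) (Set.Icc 0 T' ×ˢ Set.Ici 0) (t,r) (1,0)) t := by
  have hp : (t,r) ∈ Set.Icc 0 T' ×ˢ Set.Ici (0:ℝ) := ⟨⟨ht.1.le, ht.2.le⟩, hr⟩
  have hfd := ((hf.differentiableOn one_ne_zero) _ hp).hasFDerivWithinAt
  have hg : HasDerivWithinAt (fun τ => ((τ, r) : ℝ×ℝ)) ((1:ℝ),(0:ℝ)) (Set.Icc 0 T') t :=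
    (HasDerivAt.prodMk (hasDerivAt_id t) (hasDerivAt_const t r)).hasDerivWithinAt
  have maps : Set.MapsTo (fun τ => ((τ, r):ℝ×ℝ)) (Set.Icc 0 T')
      (Set.Icc 0 T' ×ˢ Set.Ici (0:ℝ)) := fun τ hτ => ⟨hτ, hr⟩
  exact ((hfd.comp_hasDerivWithinAt t hg maps).hasDerivAt (Icc_mem_nhds ht.1 ht.2))

lemma my_hasDerivAt_snd (hf : ContDiffOn ℝ 1 (Function.uncurry f) (Set.Icc 0 T' ×ˢ Set.Ici 0))
    {t r : ℝ} (ht : t ∈ Set.Icc 0 T') (hr : 0 < r) :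
    HasDerivAt (fun s => f t s)
      (fderivWithin ℝ (Function.uncurry f) (Set.Icc 0 T' ×ˢ Set.Ici 0) (t,r) (0,1)) r := by
  have hp : (t,r) ∈ Set.Icc 0 T' ×ˢ Set.Ici (0:ℝ) := ⟨ht, hr.le⟩
  have hfd := ((hf.differentiableOn one_ne_zero) _ hp).hasFDerivWithinAt
  have hg : HasDerivWithinAt (fun s => ((t, s) : ℝ×ℝ)) ((0:ℝ),(1:ℝ)) (Set.Ici 0) r :=
    (HasDerivAt.prodMk (hasDerivAt_const r t) (hasDerivAt_id r)).hasDerivWithinAt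
  have maps : Set.MapsTo (fun s => ((t, s):ℝ×ℝ)) (Set.Ici 0)
      (Set.Icc 0 T' ×ˢ Set.Ici (0:ℝ)) := fun s hs => ⟨ht, hs⟩
  exact ((hfd.comp_hasDerivWithinAt r hg maps).hasDerivAt (Ici_mem_nhds hr))

lemma my_fderiv_cont (hT' : 0 < T')
    (hf : ContDiffOn ℝ 1 (Function.uncurry f) (Set.Icc 0 T' ×ˢ Set.Ici 0)) (v : ℝ × ℝ) :
    ContinuousOn (fun p => fderivWithin ℝ (Function.uncurry f) (Set.Icc 0 T' ×ˢ Set.Ici 0) p v)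
      (Set.Icc 0 T' ×ˢ Set.Ici 0) := by
  have huniq : UniqueDiffOn ℝ (Set.Icc 0 T' ×ˢ Set.Ici (0:ℝ)) :=
    (uniqueDiffOn_Icc hT').prod (uniqueDiffOn_Ici 0)
  exact (hf.continuousOn_fderivWithin huniq le_rfl).clm_apply continuousOn_const

lemma my_cont_slice (hf : ContDiffOn ℝ 1 (Function.uncurry f) (Set.Icc 0 T' ×ˢ Set.Ici 0))
    {t : ℝ} (ht : t ∈ Set.Icc 0 T') : ContinuousOn (fun r => f t r) (Set.Ici 0) := by
  have hc : ContinuousOn (fun r : ℝ => ((t, r) : ℝ×ℝ)) (Set.Ici 0) :=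
    (continuous_const.prodMk continuous_id).continuousOn
  exact hf.continuousOn.comp hc (fun r hr => ⟨ht, hr⟩)


lemma my_key_ineq (N : ℕ) (hN : 1 ≤ N) (n R γ cp δ αc Mρ : ℝ)
    (hn : 0 < n) (hR : 0 < R) (hγ : 1 < γ) (hcp : 0 ≤ cp) (hδ : 0 ≤ δ) (hαc : 0 ≤ αc)
    (W P Wt Wr : ℝ → ℝ)
    (hWcont : ContinuousOn W (Set.Ici 0))
    (hPcont : ContinuousOn P (Set.Ici 0))
    (hWtcont : ContinuousOn Wt (Set.Ici 0))
    (hWd : ∀ r ∈ Set.Ioo (0:ℝ) R, HasDerivAt W (Wr r) r)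
    (hPd : ∀ r ∈ Set.Ioo (0:ℝ) R, DifferentiableAt ℝ (fun s => P s ^ (γ - 1)) r)
    (hmom' : ∀ r ∈ Set.Ioo (0:ℝ) R,
      Wt r + W r * Wr r + cp * deriv (fun s => P s ^ (γ - 1)) r
        = δ * αc * r ^ ((1:ℝ) - N) * ∫ s in (0:ℝ)..r, P s * s ^ (N - 1))
    (hPnn : ∀ r, 0 ≤ P r) (hWR : W R = 0) (hPR : P R = 0)
    (hMρ : ∀ s ∈ Set.Icc (0:ℝ) R, P s ≤ Mρ) (hMρ0 : 0 ≤ Mρ) :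
    n * (n+1) / (2 * R ^ (n+2)) * (∫ r in (0:ℝ)..R, r ^ n * W r)^2
      ≤ ∫ r in (0:ℝ)..R, r ^ n * Wt r := by
  have hγ1 : (0:ℝ) < γ - 1 := by linarith
  have huIcc : Set.uIcc (0:ℝ) R = Set.Icc 0 R := Set.uIcc_of_le hR.le
  have hIcc_Ici : Set.Icc (0:ℝ) R ⊆ Set.Ici 0 := Set.Icc_subset_Ici_self
  have hIoc_Ici : Set.Ioc (0:ℝ) R ⊆ Set.Ici 0 := fun r hr => hr.1.le
  have hrncont : ContinuousOn (fun r : ℝ => r ^ n) (Set.Ici 0) := fun r _ =>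
    (Real.continuousAt_rpow_const r n (Or.inr hn.le)).continuousWithinAt
  have hrn1cont : ContinuousOn (fun r : ℝ => r ^ (n+1)) (Set.Ici 0) := fun r _ =>
    (Real.continuousAt_rpow_const r (n+1) (Or.inr (by linarith))).continuousWithinAt
  have hPpow : ContinuousOn (fun r => P r ^ (γ - 1)) (Set.Ici 0) := fun r hr =>
    (Real.continuousAt_rpow_const (P r) (γ-1) (Or.inr hγ1.le)).comp_continuousWithinAt
      (hPcont r hr)
  set D : ℝ → ℝ := fun r => deriv (fun s => P s ^ (γ - 1)) r with hD
  set I : ℝ → ℝ := fun r => ∫ s in (0:ℝ)..r, P s * s ^ (N - 1) with hIdef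
  set force : ℝ → ℝ := fun r => δ * αc * r ^ ((1:ℝ) - N) * I r with hforce
  set Φ : ℝ → ℝ := fun r => r ^ n * ((W r)^2/2) + cp * (r ^ n * P r ^ (γ - 1)) with hΦ
  set g : ℝ → ℝ := fun r => (n/2) * (r ^ (n-1) * (W r)^2)
      + cp * n * (r ^ (n-1) * P r ^ (γ - 1)) + r ^ n * force r - r ^ n * Wt r with hg
  -- continuity of Φ
  have hΦcont : ContinuousOn Φ (Set.Icc 0 R) :=
    (((hrncont.mono hIcc_Ici).mul (((hWcont.mono hIcc_Ici).pow 2).div_const 2)).add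
      (continuousOn_const.mul ((hrncont.mono hIcc_Ici).mul (hPpow.mono hIcc_Ici))))
  -- Φ vanishes at the endpoints
  have hΦ0 : Φ 0 = 0 := by
    simp [hΦ, Real.zero_rpow hn.ne']
  have hΦR : Φ R = 0 := by
    simp [hΦ, hWR, hPR, Real.zero_rpow hγ1.ne']
  -- derivative of Φ
  have hgderiv : ∀ r ∈ Set.Ioo (0:ℝ) R, HasDerivAt Φ (g r) r := by
    intro r hr
    have h0 : (0:ℝ) < r := hr.1
    have hrn : HasDerivAt (fun s:ℝ => s ^ n) (n * r ^ (n-1)) r :=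
      Real.hasDerivAt_rpow_const (Or.inl h0.ne')
    have hW := hWd r hr
    have hW2 : HasDerivAt (fun s => (W s)^2/2) (W r * Wr r) r := by
      have h : HasDerivAt (fun s => (W s)^2/2) (((2:ℕ):ℝ) * W r ^ (2 - 1) * Wr r / 2) r :=
        (hW.pow 2).div_const 2
      convert h using 1
      push_cast
      ring
    have hPp : HasDerivAt (fun s => P s ^ (γ - 1)) (D r) r := (hPd r hr).hasDerivAt
    have h1 := (hrn.mul hW2).add ((hrn.mul hPp).const_mul cp)
    have heq : n * r ^ (n-1) * ((W r)^2/2) + r ^ n * (W r * Wr r)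
        + cp * (n * r ^ (n-1) * P r ^ (γ - 1) + r ^ n * D r) = g r := by
      have hm := hmom' r hr
      simp only [hg, hforce]
      linear_combination (r ^ n) * hm
    rw [heq] at h1
    exact h1
  -- integrability pieces
  have i_rpow : IntervalIntegrable (fun r:ℝ => r ^ (n-1)) volume 0 R :=
    intervalIntegrable_rpow' (by linarith)
  have iWsq : IntervalIntegrable (fun r => r ^ (n-1) * (W r)^2) volume 0 R :=
    i_rpow.mul_continuousOn (by rw [huIcc]; exact (hWcont.mono hIcc_Ici).pow 2)
  have iPpow : IntervalIntegrable (fun r => r ^ (n-1) * P r ^ (γ - 1)) volume 0 R :=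
    i_rpow.mul_continuousOn (by rw [huIcc]; exact hPpow.mono hIcc_Ici)
  have iWt : IntervalIntegrable (fun r => r ^ n * Wt r) volume 0 R := by
    apply ContinuousOn.intervalIntegrable
    rw [huIcc]
    exact (hrncont.mono hIcc_Ici).mul (hWtcont.mono hIcc_Ici)
  have iHt : IntervalIntegrable (fun r => r ^ n * W r) volume 0 R := by
    apply ContinuousOn.intervalIntegrable
    rw [huIcc]
    exact (hrncont.mono hIcc_Ici).mul (hWcont.mono hIcc_Ici)
  have irn1 : IntervalIntegrable (fun r:ℝ => r ^ (n+1)) volume 0 R := by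
    apply ContinuousOn.intervalIntegrable
    rw [huIcc]
    exact hrn1cont.mono hIcc_Ici
  -- properties of I
  have hNc : (N - 1 : ℕ) + 1 = N := Nat.succ_pred_eq_of_pos hN
  have hInn : ∀ r ∈ Set.Icc (0:ℝ) R, 0 ≤ I r := by
    intro r hr
    exact intervalIntegral.integral_nonneg hr.1
      (fun s hs => mul_nonneg (hPnn s) (pow_nonneg hs.1 _))
  have hIle : ∀ r ∈ Set.Ioc (0:ℝ) R, I r ≤ Mρ * r ^ (N : ℕ) := by
    intro r hr
    have h1 : I r ≤ ∫ s in (0:ℝ)..r, Mρ * s ^ (N - 1) := by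
      apply intervalIntegral.integral_mono_on hr.1.le
      · apply ContinuousOn.intervalIntegrable
        rw [Set.uIcc_of_le hr.1.le]
        exact (hPcont.mono (fun s hs => hs.1)).mul
          ((continuous_pow (N-1)).continuousOn)
      · exact ((continuous_const.mul (continuous_pow (N-1))).intervalIntegrable 0 r)
      · intro s hs
        exact mul_le_mul_of_nonneg_right
          (hMρ s ⟨hs.1, le_trans hs.2 hr.2⟩) (pow_nonneg hs.1 _)
    have h2 : (∫ s in (0:ℝ)..r, Mρ * s ^ (N - 1)) = Mρ * (r ^ (N:ℕ) / N) := by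
      rw [intervalIntegral.integral_const_mul, integral_pow]
      rw [hNc]
      have : ((N - 1 : ℕ) : ℝ) + 1 = (N : ℝ) := by
        rw [Nat.cast_sub hN]; push_cast; ring
      rw [this, zero_pow (by omega : N ≠ 0)]
      ring
    have hN1 : (1:ℝ) ≤ (N:ℝ) := by exact_mod_cast hN
    have h3 : Mρ * (r ^ (N:ℕ) / N) ≤ Mρ * r ^ (N:ℕ) := by
      apply mul_le_mul_of_nonneg_left _ hMρ0
      rw [div_le_iff₀ (by linarith : (0:ℝ) < N)]
      nlinarith [pow_nonneg hr.1.le N]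
    linarith [h1, h2 ▸ h1, h3]
  have hforestim : ∀ r ∈ Set.Ioc (0:ℝ) R, r ^ n * force r ≤ δ * αc * Mρ * (R ^ n * R) := by
    intro r hr
    have h0 : (0:ℝ) < r := hr.1
    have hcomb : r ^ ((1:ℝ) - N) * r ^ (N:ℕ) = r := by
      rw [← Real.rpow_natCast r N, ← Real.rpow_add h0]
      norm_num
    have hIr := hIle r hr
    have hInn' := hInn r ⟨hr.1.le, hr.2⟩
    have hb1 : force r ≤ δ * αc * (r ^ ((1:ℝ) - N) * (Mρ * r ^ (N:ℕ))) := by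
      simp only [hforce]
      rw [mul_assoc]
      apply mul_le_mul_of_nonneg_left _ (mul_nonneg hδ hαc)
      exact mul_le_mul_of_nonneg_left hIr (Real.rpow_nonneg h0.le _)
    have hb2 : r ^ ((1:ℝ) - N) * (Mρ * r ^ (N:ℕ)) = Mρ * r := by
      rw [show r ^ ((1:ℝ) - N) * (Mρ * r ^ (N:ℕ)) = Mρ * (r ^ ((1:ℝ) - N) * r ^ (N:ℕ)) by ring,
        hcomb]
    have hrn_nn : 0 ≤ r ^ n := Real.rpow_nonneg h0.le n
    have hrnR : r ^ n ≤ R ^ n := Real.rpow_le_rpow h0.le hr.2 hn.le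
    calc r ^ n * force r ≤ r ^ n * (δ * αc * (Mρ * r)) := by
          apply mul_le_mul_of_nonneg_left _ hrn_nn
          rw [← hb2]; exact hb1
      _ ≤ R ^ n * (δ * αc * (Mρ * R)) := by
          apply mul_le_mul hrnR _ _ (Real.rpow_nonneg hR.le n)
          · apply mul_le_mul_of_nonneg_left _ (mul_nonneg hδ hαc)
            exact mul_le_mul_of_nonneg_left hr.2 hMρ0
          · positivity
      _ = δ * αc * Mρ * (R ^ n * R) := by ring
  have hforcenn : ∀ r ∈ Set.Icc (0:ℝ) R, 0 ≤ r ^ n * force r := by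
    intro r hr
    apply mul_nonneg (Real.rpow_nonneg hr.1 n)
    exact mul_nonneg (mul_nonneg (mul_nonneg hδ hαc) (Real.rpow_nonneg hr.1 _)) (hInn r hr)
  have iforce : IntervalIntegrable (fun r => r ^ n * force r) volume 0 R := by
    rw [intervalIntegrable_iff_integrableOn_Ioc_of_le hR.le]
    apply MeasureTheory.Integrable.mono'
      (integrableOn_const measure_Ioc_lt_top.ne : IntegrableOn
        (fun _ : ℝ => δ * αc * Mρ * (R ^ n * R)) (Set.Ioc 0 R) volume)
    · -- measurability
      have hIcont : ContinuousOn I (Set.Icc 0 R) := by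
        rw [← huIcc]
        apply intervalIntegral.continuousOn_primitive_interval
        rw [huIcc]
        apply ContinuousOn.integrableOn_compact isCompact_Icc
        exact (hPcont.mono hIcc_Ici).mul ((continuous_pow (N-1)).continuousOn)
      have : ContinuousOn (fun r => r ^ n * force r) (Set.Ioc 0 R) := by
        apply ContinuousOn.mul (hrncont.mono hIoc_Ici)
        apply ContinuousOn.mul
        · apply ContinuousOn.mul continuousOn_const
          intro r hr
          exact (Real.continuousAt_rpow_const r _ (Or.inl hr.1.ne')).continuousWithinAt
        · exact hIcont.mono Set.Ioc_subset_Icc_self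
      exact this.aestronglyMeasurable measurableSet_Ioc
    · rw [ae_restrict_iff' measurableSet_Ioc]
      filter_upwards with r hr
      rw [Real.norm_eq_abs, abs_of_nonneg (hforcenn r ⟨hr.1.le, hr.2⟩)]
      exact hforestim r hr
  -- FTC
  have hg_int : IntervalIntegrable g volume 0 R := by
    apply IntervalIntegrable.sub _ iWt
    apply IntervalIntegrable.add _ iforce
    exact (iWsq.const_mul (n/2)).add (iPpow.const_mul (cp*n))
  have hFTC : (∫ r in (0:ℝ)..R, g r) = 0 := by
    rw [integral_eq_sub_of_hasDeriv_right_of_le hR.le hΦcont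
        (fun r hr => (hgderiv r hr).hasDerivWithinAt) hg_int, hΦR, hΦ0, sub_zero]
  have hsplit : (∫ r in (0:ℝ)..R, g r)
      = (∫ r in (0:ℝ)..R, (n/2) * (r ^ (n-1) * (W r)^2))
        + (∫ r in (0:ℝ)..R, cp * n * (r ^ (n-1) * P r ^ (γ-1)))
        + (∫ r in (0:ℝ)..R, r ^ n * force r)
        - (∫ r in (0:ℝ)..R, r ^ n * Wt r) := by
    simp only [hg]
    rw [intervalIntegral.integral_sub
        (((iWsq.const_mul (n/2)).add (iPpow.const_mul (cp*n))).add iforce) iWt,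
      intervalIntegral.integral_add ((iWsq.const_mul (n/2)).add (iPpow.const_mul (cp*n))) iforce,
      intervalIntegral.integral_add (iWsq.const_mul (n/2)) (iPpow.const_mul (cp*n))]
  have hJ2 : 0 ≤ ∫ r in (0:ℝ)..R, cp * n * (r ^ (n-1) * P r ^ (γ-1)) := by
    apply intervalIntegral.integral_nonneg hR.le
    intro r hr
    have h1 : (0:ℝ) ≤ r ^ (n-1) := Real.rpow_nonneg hr.1 _
    have h2 : (0:ℝ) ≤ P r ^ (γ-1) := Real.rpow_nonneg (hPnn r) _
    have := mul_nonneg h1 h2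
    positivity
  have hI3 : 0 ≤ ∫ r in (0:ℝ)..R, r ^ n * force r :=
    intervalIntegral.integral_nonneg hR.le hforcenn
  set Dint := ∫ r in (0:ℝ)..R, r ^ n * Wt r with hDint
  set Jv := ∫ r in (0:ℝ)..R, r ^ (n-1) * (W r)^2 with hJv
  have hlow : (n/2) * Jv ≤ Dint := by
    have h := hFTC
    rw [hsplit, intervalIntegral.integral_const_mul] at h
    linarith
  -- Cauchy-Schwarz
  set Ht := ∫ r in (0:ℝ)..R, r ^ n * W r with hHt
  set A : ℝ := R ^ (n+2) / (n+2) with hAdef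
  have hRn2 : (0:ℝ) < R ^ (n+2) := Real.rpow_pos_of_pos hR _
  have hApos : 0 < A := by rw [hAdef]; positivity
  have hA : (∫ r in (0:ℝ)..R, r ^ (n+1)) = A := by
    rw [integral_rpow (Or.inl (by linarith : (-1:ℝ) < n+1))]
    rw [Real.zero_rpow (by linarith : n+1+1 ≠ 0)]
    rw [hAdef, show n+1+1 = n+2 by ring, sub_zero]
  set cc : ℝ := Ht / A with hcc
  have hexg : Set.EqOn (fun r => r ^ (n-1) * (W r - cc*r)^2)
      (fun r => r ^ (n-1) * (W r)^2 - 2*cc*(r ^ n * W r) + cc^2 * r ^ (n+1))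
      (Set.uIcc 0 R) := by
    intro r hr
    rw [huIcc] at hr
    rcases eq_or_lt_of_le hr.1 with h|h
    · simp only [← h]
      rw [Real.zero_rpow hn.ne', Real.zero_rpow (by linarith : n+1 ≠ 0)]
      ring
    · have e1 : r ^ (n-1) * r = r ^ n := by
        nth_rewrite 2 [show r = r ^ (1:ℝ) by rw [Real.rpow_one]]
        rw [← Real.rpow_add h]
        norm_num
      have e2 : r ^ (n-1) * r^2 = r ^ (n+1) := by
        rw [show (r:ℝ)^(2:ℕ) = r ^ ((2:ℕ):ℝ) by rw [Real.rpow_natCast], ← Real.rpow_add h]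
        congr 1
        push_cast
        ring
      simp only
      linear_combination (-(2*cc*W r))*e1 + cc^2 * e2
  have hCS0 : 0 ≤ ∫ r in (0:ℝ)..R,
      (r ^ (n-1) * (W r)^2 - 2*cc*(r ^ n * W r) + cc^2 * r ^ (n+1)) := by
    rw [← intervalIntegral.integral_congr hexg]
    exact intervalIntegral.integral_nonneg hR.le
      (fun r hr => mul_nonneg (Real.rpow_nonneg hr.1 _) (sq_nonneg _))
  have hCSsplit : (∫ r in (0:ℝ)..R,
      (r ^ (n-1) * (W r)^2 - 2*cc*(r ^ n * W r) + cc^2 * r ^ (n+1)))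
      = Jv - 2*cc*Ht + cc^2 * A := by
    rw [intervalIntegral.integral_add (iWsq.sub (iHt.const_mul (2*cc))) (irn1.const_mul (cc^2)),
      intervalIntegral.integral_sub iWsq (iHt.const_mul (2*cc)),
      intervalIntegral.integral_const_mul, intervalIntegral.integral_const_mul, hA]
  have hCS : Ht^2 / A ≤ Jv := by
    have h := hCS0
    rw [hCSsplit, hcc] at h
    have e3 : (Ht/A)^2 * A = Ht^2/A := by field_simp
    have e4 : 2*(Ht/A)*Ht = 2*(Ht^2/A) := by field_simp
    nlinarith [h]
  -- combine
  have hfin1 : (n/2) * (Ht^2 / A) ≤ Dint := by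
    have := mul_le_mul_of_nonneg_left hCS (by positivity : (0:ℝ) ≤ n/2)
    linarith
  have hfin2 : n * (n+1) / (2 * R ^ (n+2)) * Ht^2 ≤ (n/2) * (Ht^2 / A) := by
    rw [hAdef]
    rw [show (n/2) * (Ht^2 / (R ^ (n+2) / (n+2))) = n * (n+2) / (2 * R ^ (n+2)) * Ht^2 by
      field_simp]
    have hnum : n * (n+1) / (2 * R ^ (n+2)) ≤ n * (n+2) / (2 * R ^ (n+2)) := by
      gcongr
      linarith
    exact mul_le_mul_of_nonneg_right hnum (sq_nonneg Ht)
  linarith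

lemma my_H_hasDeriv (T' R n Cv : ℝ) (hT'pos : 0 < T') (hR : 0 < R) (hn : 0 < n)
    (V : ℝ → ℝ → ℝ) (Vt : ℝ × ℝ → ℝ)
    (hCv : ∀ p ∈ Set.Icc (0:ℝ) T' ×ˢ Set.Icc (0:ℝ) R, ‖Vt p‖ ≤ Cv)
    (hVcont : ∀ t ∈ Set.Icc (0:ℝ) T', ContinuousOn (V t) (Set.Ici 0))
    (hVtcont : ∀ t ∈ Set.Icc (0:ℝ) T', ContinuousOn (fun r => Vt (t, r)) (Set.Ici 0))
    (hVtd : ∀ t ∈ Set.Ioo (0:ℝ) T', ∀ r ∈ Set.Ici (0:ℝ),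
       HasDerivAt (fun τ => V τ r) (Vt (t, r)) t)
    (hrncont : ContinuousOn (fun r : ℝ => r ^ n) (Set.Ici 0)) :
    ∀ t ∈ Set.Ioo (0:ℝ) T',
      HasDerivAt (fun t => ∫ r in (0:ℝ)..R, r ^ n * V t r) (∫ r in (0:ℝ)..R, r ^ n * Vt (t, r)) t := by
  intro t₀ ht₀
  set ε : ℝ := min t₀ (T' - t₀) with hεdef
  have hε : 0 < ε := lt_min ht₀.1 (by linarith [ht₀.2])
  have hball : Metric.ball t₀ ε ⊆ Set.Ioo 0 T' := by
    intro x hx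
    rw [Metric.mem_ball, Real.dist_eq, abs_lt] at hx
    constructor
    · linarith [min_le_left t₀ (T'-t₀), hx.1]
    · linarith [min_le_right t₀ (T'-t₀), hx.2]
  have hIoc_Ici : Set.Ioc (0:ℝ) R ⊆ Set.Ici 0 := fun r hr => hr.1.le
  have hmeas : ∀ x ∈ Set.Icc (0:ℝ) T',
      AEStronglyMeasurable (fun r => r ^ n * V x r) (volume.restrict (Set.uIoc (0:ℝ) R)) := by
    intro x hx
    have : ContinuousOn (fun r : ℝ => r ^ n * V x r) (Set.Ioc 0 R) :=
      (hrncont.mono hIoc_Ici).mul ((hVcont x hx).mono hIoc_Ici)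
    rw [Set.uIoc_of_le hR.le]
    exact this.aestronglyMeasurable measurableSet_Ioc
  have hrnR : ∀ r ∈ Set.Ioc (0:ℝ) R, r ^ n ≤ R ^ n := fun r hr =>
    Real.rpow_le_rpow hr.1.le hr.2 hn.le
  have hrnn : ∀ r ∈ Set.Ioc (0:ℝ) R, (0:ℝ) ≤ r ^ n := fun r hr => Real.rpow_nonneg hr.1.le n
  have hmemIcc : t₀ ∈ Set.Icc (0:ℝ) T' := ⟨ht₀.1.le, ht₀.2.le⟩
  have main := intervalIntegral.hasDerivAt_integral_of_dominated_loc_of_deriv_le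
    (F := fun x r => r ^ n * V x r) (F' := fun x r => r ^ n * Vt (x, r))
    (bound := fun _ => R ^ n * Cv) (a := 0) (b := R) (x₀ := t₀) (μ := volume) (Metric.ball_mem_nhds t₀ hε)
    (by
      filter_upwards [isOpen_Ioo.eventually_mem ht₀] with x hx
      exact hmeas x ⟨hx.1.le, hx.2.le⟩)
    (by
      apply ContinuousOn.intervalIntegrable
      rw [Set.uIcc_of_le hR.le]
      exact (hrncont.mono Set.Icc_subset_Ici_self).mul
        ((hVcont t₀ hmemIcc).mono Set.Icc_subset_Ici_self))
    (by
      have : ContinuousOn (fun r : ℝ => r ^ n * Vt (t₀, r)) (Set.Ioc 0 R) :=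
        (hrncont.mono hIoc_Ici).mul ((hVtcont t₀ hmemIcc).mono hIoc_Ici)
      rw [Set.uIoc_of_le hR.le]
      exact this.aestronglyMeasurable measurableSet_Ioc)
    (by
      filter_upwards with r
      intro hr x hx
      rw [Set.uIoc_of_le hR.le] at hr
      have hx' := hball hx
      have h1 : ‖Vt (x, r)‖ ≤ Cv := hCv _ ⟨⟨hx'.1.le, hx'.2.le⟩, ⟨hr.1.le, hr.2⟩⟩
      have h2 : |r ^ n| = r ^ n := abs_of_nonneg (hrnn r hr)
      calc ‖r ^ n * Vt (x, r)‖ = r ^ n * ‖Vt (x, r)‖ := by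
            rw [norm_mul, Real.norm_eq_abs, h2]
        _ ≤ R ^ n * Cv := by
            apply mul_le_mul (hrnR r hr) h1 (norm_nonneg _)
            exact Real.rpow_nonneg hR.le n
      )
    intervalIntegrable_const
    (by
      filter_upwards with r
      intro hr x hx
      rw [Set.uIoc_of_le hR.le] at hr
      exact (hVtd x (hball hx) r hr.1.le).const_mul (r ^ n))
  exact main.2

lemma my_H_cont (T' R n Mv : ℝ) (hT'pos : 0 < T') (hR : 0 < R) (hn : 0 < n)
    (V : ℝ → ℝ → ℝ)
    (hVC1 : ContDiffOn ℝ 1 (Function.uncurry V) (Set.Icc 0 T' ×ˢ Set.Ici 0))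
    (hMv : ∀ p ∈ Set.Icc (0:ℝ) T' ×ˢ Set.Icc (0:ℝ) R, ‖Function.uncurry V p‖ ≤ Mv)
    (hVcont : ∀ t ∈ Set.Icc (0:ℝ) T', ContinuousOn (V t) (Set.Ici 0))
    (hrncont : ContinuousOn (fun r : ℝ => r ^ n) (Set.Ici 0)) :
    ContinuousOn (fun t => ∫ r in (0:ℝ)..R, r ^ n * V t r) (Set.Icc 0 T') := by
  have hIoc_Ici : Set.Ioc (0:ℝ) R ⊆ Set.Ici 0 := fun r hr => hr.1.le
  have hcongr : ∀ t : ℝ, (∫ r in (0:ℝ)..R, r ^ n * V t r)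
      = ∫ r in Set.Ioc (0:ℝ) R, r ^ n * V t r := fun t =>
    intervalIntegral.integral_of_le hR.le
  rw [show (fun t => ∫ r in (0:ℝ)..R, r ^ n * V t r)
      = fun t => ∫ r in Set.Ioc (0:ℝ) R, r ^ n * V t r from funext hcongr]
  intro t₀ ht₀
  apply MeasureTheory.continuousWithinAt_of_dominated
    (bound := fun r => R ^ n * Mv)
  · filter_upwards [self_mem_nhdsWithin] with x hx
    exact ((hrncont.mono hIoc_Ici).mul ((hVcont x hx).mono hIoc_Ici)).aestronglyMeasurable
      measurableSet_Ioc
  · filter_upwards [self_mem_nhdsWithin] with x hx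
    rw [ae_restrict_iff' measurableSet_Ioc]
    filter_upwards with r hr
    have h1 : ‖V x r‖ ≤ Mv := hMv (x, r) ⟨hx, ⟨hr.1.le, hr.2⟩⟩
    have h2 : |r ^ n| = r ^ n := abs_of_nonneg (Real.rpow_nonneg hr.1.le n)
    calc ‖r ^ n * V x r‖ = r ^ n * ‖V x r‖ := by rw [norm_mul, Real.norm_eq_abs, h2]
      _ ≤ R ^ n * Mv := mul_le_mul (Real.rpow_le_rpow hr.1.le hr.2 hn.le) h1
          (norm_nonneg _) (Real.rpow_nonneg hR.le n)
  · exact integrableOn_const measure_Ioc_lt_top.ne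
  · rw [ae_restrict_iff' measurableSet_Ioc]
    filter_upwards with r hr
    have hc : ContinuousOn (fun τ : ℝ => ((τ, r) : ℝ×ℝ)) (Set.Icc 0 T') :=
      (continuous_id.prodMk continuous_const).continuousOn
    have h := (hVC1.continuousOn.comp hc (fun τ hτ => ⟨hτ, hr.1.le⟩)) t₀ ht₀
    exact continuousWithinAt_const.mul h

end auxLB

/-- Explicit lower bound of the integration method for the Euler (`δ = 0`) or repulsive
Euler–Poisson (`δ = 1`) equations: on any time interval `[0,T′]` with
`T′ < 2R^{n+2}/(n(n+1)H₀)`, the functional `H(t) = ∫₀^R rⁿ V(t,r) dr` satisfies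
`H(t) ≥ −2R^{n+2}H₀/(n(n+1)H₀t − 2R^{n+2})`. -/
theorem explicit_lower_bound_repulsive
    (N : ℕ) (hN : 1 ≤ N) (n R H₀ K γ T' δ : ℝ)
    (hn : 0 < n) (hR : 0 < R) (hH₀ : 0 < H₀) (hK : 0 ≤ K) (hγ : 1 < γ)
    (hδ : δ = 0 ∨ δ = 1)
    (hT'pos : 0 < T') (hT' : T' < 2 * R ^ (n + 2) / (n * (n + 1) * H₀))
    (ρ V : ℝ → ℝ → ℝ)
    (hρC1 : ContDiffOn ℝ 1 (Function.uncurry ρ) (Set.Icc 0 T' ×ˢ Set.Ici 0))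
    (hVC1 : ContDiffOn ℝ 1 (Function.uncurry V) (Set.Icc 0 T' ×ˢ Set.Ici 0))
    (hρnn : ∀ t r, 0 ≤ ρ t r)
    (hsupp : ∀ t r, R ≤ r → ρ t r = 0 ∧ V t r = 0)
    (hdiffp : ∀ t ∈ Set.Icc (0:ℝ) T', ∀ r ∈ Set.Ioo (0:ℝ) R,
      DifferentiableAt ℝ (fun s => ρ t s ^ (γ - 1)) r)
    (hmom : ∀ t ∈ Set.Icc (0:ℝ) T', ∀ r ∈ Set.Ioo (0:ℝ) R,
      deriv (fun τ => V τ r) t + V t r * deriv (fun s => V t s) r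
        + (K * γ / (γ - 1)) * deriv (fun s => ρ t s ^ (γ - 1)) r
      = δ * alphaConst N * r ^ ((1:ℝ) - N) * ∫ s in (0:ℝ)..r, ρ t s * s ^ (N - 1))
    (hH0 : (∫ r in (0:ℝ)..R, r ^ n * V 0 r) = H₀) :
    ∀ t ∈ Set.Icc (0:ℝ) T',
      -(2 * R ^ (n + 2) * H₀) / (n * (n + 1) * H₀ * t - 2 * R ^ (n + 2))
      ≤ ∫ r in (0:ℝ)..R, r ^ n * V t r := by
  classical
  open Set Function MeasureTheory intervalIntegral in
  set S : Set (ℝ × ℝ) := Set.Icc 0 T' ×ˢ Set.Ici 0 with hSdef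
  set Vt : ℝ × ℝ → ℝ := fun p => fderivWithin ℝ (Function.uncurry V) S p (1,0) with hVtdef
  set cp : ℝ := K * γ / (γ - 1) with hcpdef
  have hcp : 0 ≤ cp := by
    rw [hcpdef]
    apply div_nonneg (by nlinarith) (by linarith)
  have hδ' : 0 ≤ δ := by rcases hδ with h | h <;> simp [h] <;> norm_num
  have hRn2 : (0:ℝ) < R ^ (n+2) := Real.rpow_pos_of_pos hR _
  set c₀ : ℝ := n * (n+1) / (2 * R ^ (n+2)) with hc₀def
  have hc₀ : 0 < c₀ := by rw [hc₀def]; positivity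
  set H : ℝ → ℝ := fun t => ∫ r in (0:ℝ)..R, r ^ n * V t r with hHdef
  -- bounds on the compact set
  have hK0 : IsCompact (Set.Icc (0:ℝ) T' ×ˢ Set.Icc (0:ℝ) R) := isCompact_Icc.prod isCompact_Icc
  have hK0S : (Set.Icc (0:ℝ) T' ×ˢ Set.Icc (0:ℝ) R) ⊆ S :=
    Set.prod_mono subset_rfl Set.Icc_subset_Ici_self
  obtain ⟨Cv, hCv⟩ := hK0.exists_bound_of_continuousOn
    ((my_fderiv_cont hT'pos hVC1 (1,0)).mono hK0S)
  obtain ⟨Mρ, hMρ⟩ := hK0.exists_bound_of_continuousOn (hρC1.continuousOn.mono hK0S)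
  obtain ⟨Mv, hMv⟩ := hK0.exists_bound_of_continuousOn (hVC1.continuousOn.mono hK0S)
  have hMρ0 : 0 ≤ Mρ :=
    le_trans (norm_nonneg _) (hMρ (0,0) ⟨⟨le_rfl, hT'pos.le⟩, ⟨le_rfl, hR.le⟩⟩)
  -- continuity of slices
  have hVcont : ∀ t ∈ Set.Icc (0:ℝ) T', ContinuousOn (V t) (Set.Ici 0) :=
    fun t ht => my_cont_slice hVC1 ht
  have hρcont : ∀ t ∈ Set.Icc (0:ℝ) T', ContinuousOn (ρ t) (Set.Ici 0) :=
    fun t ht => my_cont_slice hρC1 ht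
  have hVtcont : ∀ t ∈ Set.Icc (0:ℝ) T', ContinuousOn (fun r => Vt (t, r)) (Set.Ici 0) := by
    intro t ht
    have hc : ContinuousOn (fun r : ℝ => ((t, r) : ℝ×ℝ)) (Set.Ici 0) :=
      (continuous_const.prodMk continuous_id).continuousOn
    exact (my_fderiv_cont hT'pos hVC1 (1,0)).comp hc (fun r hr => ⟨ht, hr⟩)
  have hrncont : ContinuousOn (fun r : ℝ => r ^ n) (Set.Ici 0) := fun r _ =>
    (Real.continuousAt_rpow_const r n (Or.inr hn.le)).continuousWithinAt
  -- derivative of H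
  have hHderiv : ∀ t ∈ Set.Ioo (0:ℝ) T',
      HasDerivAt H (∫ r in (0:ℝ)..R, r ^ n * Vt (t, r)) t :=
    my_H_hasDeriv T' R n Cv hT'pos hR hn V Vt hCv hVcont hVtcont
      (fun t ht r hr => my_hasDerivAt_fst hVC1 ht hr) hrncont
  -- key differential inequality
  have hkey : ∀ t ∈ Set.Ioo (0:ℝ) T',
      c₀ * (H t)^2 ≤ ∫ r in (0:ℝ)..R, r ^ n * Vt (t, r) := by
    intro t ht
    have htI : t ∈ Set.Icc (0:ℝ) T' := ⟨ht.1.le, ht.2.le⟩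
    have hmom' : ∀ r ∈ Set.Ioo (0:ℝ) R,
        Vt (t, r) + V t r * (fderivWithin ℝ (Function.uncurry V) S (t,r) (0,1))
          + cp * deriv (fun s => ρ t s ^ (γ - 1)) r
        = δ * alphaConst N * r ^ ((1:ℝ) - N) * ∫ s in (0:ℝ)..r, ρ t s * s ^ (N - 1) := by
      intro r hr
      have h1 := (my_hasDerivAt_fst hVC1 ht (le_of_lt hr.1 : r ∈ Set.Ici (0:ℝ))).deriv
      have h2 := (my_hasDerivAt_snd hVC1 htI hr.1).deriv
      have h3 := hmom t htI r hr
      rw [h1, h2] at h3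
      exact h3
    exact my_key_ineq N hN n R γ cp δ (alphaConst N) Mρ hn hR hγ hcp hδ'
      (alphaConst_nonneg N hN) (V t) (ρ t) (fun r => Vt (t, r))
      (fun r => fderivWithin ℝ (Function.uncurry V) S (t,r) (0,1))
      (hVcont t htI) (hρcont t htI) (hVtcont t htI)
      (fun r hr => my_hasDerivAt_snd hVC1 htI hr.1)
      (hdiffp t htI) hmom' (hρnn t) (hsupp t R le_rfl).2 (hsupp t R le_rfl).1
      (fun s hs => le_trans (le_abs_self _) (hMρ (t, s) ⟨htI, hs⟩)) hMρ0
  -- continuity of H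
  have hHcont : ContinuousOn H (Set.Icc 0 T') :=
    my_H_cont T' R n Mv hT'pos hR hn V hVC1 hMv hVcont hrncont
  -- monotonicity of H
  have hHmono : MonotoneOn H (Set.Icc 0 T') := by
    apply monotoneOn_of_deriv_nonneg (convex_Icc 0 T') hHcont
    · rw [interior_Icc]
      exact fun t ht => (hHderiv t ht).differentiableAt.differentiableWithinAt
    · rw [interior_Icc]
      intro t ht
      rw [(hHderiv t ht).deriv]
      exact le_trans (by positivity) (hkey t ht)
  have hH0' : H 0 = H₀ := hH0
  have hHge : ∀ t ∈ Set.Icc (0:ℝ) T', H₀ ≤ H t := by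
    intro t ht
    calc H₀ = H 0 := hH0'.symm
      _ ≤ H t := hHmono ⟨le_rfl, hT'pos.le⟩ ht ht.1
  have hHpos : ∀ t ∈ Set.Icc (0:ℝ) T', 0 < H t := fun t ht => lt_of_lt_of_le hH₀ (hHge t ht)
  -- the comparison function
  set φ : ℝ → ℝ := fun t => (H t)⁻¹ + c₀ * t with hφdef
  have hφanti : AntitoneOn φ (Set.Icc 0 T') := by
    apply antitoneOn_of_deriv_nonpos (convex_Icc 0 T')
    · exact (hHcont.inv₀ (fun t ht => (hHpos t ht).ne')).add
        (continuous_const.mul continuous_id).continuousOn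
    · rw [interior_Icc]
      intro t ht
      have h := ((hHderiv t ht).inv (hHpos t ⟨ht.1.le, ht.2.le⟩).ne').add
        ((hasDerivAt_id t).const_mul c₀)
      exact h.differentiableAt.differentiableWithinAt
    · rw [interior_Icc]
      intro t ht
      have htI : t ∈ Set.Icc (0:ℝ) T' := ⟨ht.1.le, ht.2.le⟩
      have hne := (hHpos t htI).ne'
      have h := ((hHderiv t ht).inv hne).add ((hasDerivAt_id t).const_mul c₀)
      have hde : deriv φ t
          = -(∫ r in (0:ℝ)..R, r ^ n * Vt (t, r)) / (H t)^2 + c₀ * 1 := h.deriv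
      rw [hde]
      have hk := hkey t ht
      have hsq : (0:ℝ) < (H t)^2 := by positivity
      have : c₀ ≤ (∫ r in (0:ℝ)..R, r ^ n * Vt (t, r)) / (H t)^2 := by
        rw [le_div_iff₀ hsq]
        linarith [hk]
      have h2 : -(∫ r in (0:ℝ)..R, r ^ n * Vt (t, r)) / (H t)^2 + c₀ * 1 ≤ 0 := by
        rw [neg_div]
        nlinarith [this]
      simpa using h2
  -- conclude
  intro t ht
  have h5 : φ t ≤ φ 0 := hφanti ⟨le_rfl, hT'pos.le⟩ ht ht.1
  have hφ0 : φ 0 = H₀⁻¹ := by simp [hφdef, hH0']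
  rw [hφ0] at h5
  have hHt := hHpos t ht
  have hTbd : n * (n+1) * H₀ * T' < 2 * R ^ (n+2) := by
    have := (lt_div_iff₀ (by positivity : (0:ℝ) < n * (n+1) * H₀)).mp hT'
    linarith
  have hmul : (n * (n+1) * H₀) * t ≤ (n * (n+1) * H₀) * T' :=
    mul_le_mul_of_nonneg_left ht.2 (by positivity)
  have hd : n * (n+1) * H₀ * t - 2 * R ^ (n+2) < 0 := by
    nlinarith [hmul, hTbd]
  rw [div_le_iff_of_neg hd]
  have e1 : H t * (H t)⁻¹ = 1 := mul_inv_cancel₀ hHt.ne'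
  have hc₀e : c₀ * (2 * R ^ (n+2)) = n * (n+1) := by
    rw [hc₀def]; field_simp
  have h5' : (H t)⁻¹ + c₀ * t ≤ H₀⁻¹ := h5
  have k1 : H t * ((H t)⁻¹ + c₀ * t) ≤ H t * H₀⁻¹ :=
    mul_le_mul_of_nonneg_left h5' hHt.le
  have k2 : 1 + H t * (c₀ * t) ≤ H t * H₀⁻¹ := by
    rw [mul_add, e1] at k1
    exact k1
  have k3 : H₀ * (1 + H t * (c₀ * t)) ≤ H₀ * (H t * H₀⁻¹) :=
    mul_le_mul_of_nonneg_left k2 hH₀.le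
  have k4 : H₀ * (H t * H₀⁻¹) = H t := by field_simp
  have k5 : H₀ + H₀ * (H t * (c₀ * t)) ≤ H t := by
    rw [k4] at k3
    linarith [k3]
  have k8 : H₀ + H₀ * (H t * (c₀ * t)) - H t ≤ 0 := by linarith
  calc H t * (n * (n+1) * H₀ * t - 2 * R ^ (n+2))
      = 2 * R ^ (n+2) * (H₀ + H₀ * (H t * (c₀ * t)) - H t) - 2 * R ^ (n+2) * H₀ := by
        rw [← hc₀e]; ring
    _ ≤ -(2 * R ^ (n+2) * H₀) := by nlinarith [k8, hRn2]
end
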